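/- Let s = [[A, B], [C, D]] be a symplectic matrix with B invertible, and define the generating function W(x, x') = (1/2)⟨DB⁻¹x, x⟩ - ⟨B⁻¹x, x'⟩ + (1/2)⟨B⁻¹Ax', x'⟩ on ℝⁿ × ℝⁿ. Then s(x', p') = (x, p) holds if and only if p = ∇ₓW(x, x') and p' = -∇_{x'}W(x, x'). -/

import Mathlib

open Matrix

local notation "⟪" x ", " y "⟫" => @inner ℝ _ _ x y

lemma hasGradientAt_quad (n : ℕ) (M : Matrix (Fin n) (Fin n) ℝ) (hM : Mᵀ = M)
    (v : Fin n → ℝ) (k : ℝ) (x : EuclideanSpace ℝ (Fin n)) :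
    HasGradientAt (fun y : EuclideanSpace ℝ (Fin n) =>
      (1/2) * (M.mulVec y ⬝ᵥ y) + (v ⬝ᵥ y) + k)
      ((WithLp.equiv 2 (Fin n → ℝ)).symm (M.mulVec x + v)) x := by
  set T : EuclideanSpace ℝ (Fin n) →L[ℝ] EuclideanSpace ℝ (Fin n) :=
    LinearMap.toContinuousLinearMap (Matrix.toEuclideanLin M) with hT
  set v' : EuclideanSpace ℝ (Fin n) := (WithLp.equiv 2 (Fin n → ℝ)).symm v with hv'
  have hfun : (fun y : EuclideanSpace ℝ (Fin n) => (1/2) * (M.mulVec y ⬝ᵥ y) + (v ⬝ᵥ y) + k)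
      = fun y : EuclideanSpace ℝ (Fin n) => (1/2) * ⟪T y, y⟫ + ⟪v', y⟫ + k := by
    funext y
    have h5 : ⟪T y, y⟫ = M.mulVec y ⬝ᵥ y := by
      simp [hT, PiLp.inner_apply, RCLike.inner_apply, Matrix.toEuclideanLin_apply,
        dotProduct, mul_comm]
    rw [h5]
    simp [hv', PiLp.inner_apply, RCLike.inner_apply, dotProduct, mul_comm]
  rw [hasGradientAt_iff_hasFDerivAt, hfun]
  have h1 : HasFDerivAt (fun y : EuclideanSpace ℝ (Fin n) => ⟪T y, y⟫)
      ((fderivInnerCLM ℝ (T x, x)).comp (T.prod (ContinuousLinearMap.id ℝ _))) x :=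
    (T.hasFDerivAt).inner ℝ (hasFDerivAt_id x)
  have h2 : HasFDerivAt (fun y : EuclideanSpace ℝ (Fin n) => ⟪v', y⟫) (innerSL ℝ v') x :=
    (innerSL ℝ v').hasFDerivAt
  have h3 := ((h1.const_mul ((1:ℝ)/2)).add h2).add_const k
  convert h3 using 1
  case e'_8 => rfl
  case e'_9 => rfl
  case e'_11 => rfl
  ext h
  have key : M.mulVec h ⬝ᵥ (x : Fin n → ℝ) = M.mulVec x ⬝ᵥ h := by
    rw [dotProduct_comm, dotProduct_mulVec, ← mulVec_transpose, hM]
  simp [InnerProductSpace.toDual_apply_apply, fderivInnerCLM_apply, hT, hv',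
    Matrix.toEuclideanLin_apply, PiLp.inner_apply, RCLike.inner_apply]
  simp only [dotProduct] at key
  rw [show ∑ i, x.ofLp i * (M *ᵥ h.ofLp) i = ∑ i, (M *ᵥ h.ofLp) i * x.ofLp i from
    Finset.sum_congr rfl fun _ _ => mul_comm _ _, key,
    show ∑ i, (M *ᵥ x.ofLp) i * h.ofLp i = ∑ i, h.ofLp i * (M *ᵥ x.ofLp) i from
    Finset.sum_congr rfl fun _ _ => mul_comm _ _]
  ring


/-- The standard symplectic matrix `J = [[0, I], [-I, 0]]`. -/
def stdJ (n : ℕ) : Matrix (Fin n ⊕ Fin n) (Fin n ⊕ Fin n) ℝ :=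
  Matrix.fromBlocks 0 1 (-1) 0

lemma blocks_of_symplectic (n : ℕ) (A B C D : Matrix (Fin n) (Fin n) ℝ)
    (hs : (Matrix.fromBlocks A B C D)ᵀ * stdJ n * Matrix.fromBlocks A B C D = stdJ n) :
    Bᵀ * D = Dᵀ * B ∧ Dᵀ * A - Bᵀ * C = 1 ∧ A * Bᵀ = B * Aᵀ := by
  have hs' : Matrix.fromBlocks (-(Cᵀ*A) + Aᵀ*C) (-(Cᵀ*B) + Aᵀ*D) (-(Dᵀ*A) + Bᵀ*C) (-(Dᵀ*B) + Bᵀ*D)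
      = Matrix.fromBlocks 0 1 (-1) 0 := by
    conv_rhs => rw [show (Matrix.fromBlocks 0 1 (-1) 0 : Matrix (Fin n ⊕ Fin n) (Fin n ⊕ Fin n) ℝ)
      = stdJ n from rfl, ← hs]
    simp [stdJ, Matrix.fromBlocks_transpose, Matrix.fromBlocks_multiply, Matrix.mul_assoc]
  have e21 := congrArg Matrix.toBlocks₂₁ hs'
  have e22 := congrArg Matrix.toBlocks₂₂ hs'
  simp only [Matrix.toBlocks_fromBlocks₂₁, Matrix.toBlocks_fromBlocks₂₂] at e21 e22
  have hJJ : stdJ n * stdJ n = -1 := by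
    simp only [stdJ, Matrix.fromBlocks_multiply]
    rw [← Matrix.fromBlocks_one, Matrix.fromBlocks_neg]
    simp
  set s := Matrix.fromBlocks A B C D with hsdef
  have hu : (-(stdJ n) * sᵀ * stdJ n) * s = 1 := by
    rw [Matrix.mul_assoc, Matrix.mul_assoc, ← Matrix.mul_assoc sᵀ, hs]
    rw [neg_mul, hJJ, neg_neg]
  have hu' : s * (-(stdJ n) * sᵀ * stdJ n) = 1 := mul_eq_one_comm.mp hu
  have hs2 : s * stdJ n * sᵀ = stdJ n := by
    have h1 : s * (-(stdJ n) * sᵀ * stdJ n) * stdJ n = stdJ n := by rw [hu', Matrix.one_mul]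
    have h2 : s * (-(stdJ n) * sᵀ * stdJ n) * stdJ n = -(s * stdJ n * sᵀ) * (stdJ n * stdJ n) := by
      simp only [neg_mul, mul_neg, Matrix.mul_assoc]
    rw [h2, hJJ] at h1
    simpa using h1
  have hs2' : Matrix.fromBlocks (-(B*Aᵀ) + A*Bᵀ) (-(B*Cᵀ) + A*Dᵀ) (-(D*Aᵀ) + C*Bᵀ) (-(D*Cᵀ) + C*Dᵀ)
      = Matrix.fromBlocks 0 1 (-1) 0 := by
    conv_rhs => rw [show (Matrix.fromBlocks 0 1 (-1) 0 : Matrix (Fin n ⊕ Fin n) (Fin n ⊕ Fin n) ℝ)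
      = stdJ n from rfl, ← hs2]
    simp [hsdef, stdJ, Matrix.fromBlocks_transpose, Matrix.fromBlocks_multiply, Matrix.mul_assoc]
  have f11 := congrArg Matrix.toBlocks₁₁ hs2'
  simp only [Matrix.toBlocks_fromBlocks₁₁] at f11
  refine ⟨?_, ?_, ?_⟩
  · linear_combination (norm := noncomm_ring) e22
  · linear_combination (norm := noncomm_ring) -e21
  · linear_combination (norm := noncomm_ring) f11

/-- Let `s = [[A, B], [C, D]]` be symplectic with `det B ≠ 0` and
`W(x, x') = (1/2)⟨DB⁻¹x, x⟩ - ⟨B⁻¹x, x'⟩ + (1/2)⟨B⁻¹Ax', x'⟩` its generating function.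
Then `s(x', p') = (x, p)` iff `p = ∇ₓW(x,x')` and `p' = -∇_{x'}W(x,x')`. -/
theorem generating_function_of_symplectic (n : ℕ) (A B C D : Matrix (Fin n) (Fin n) ℝ)
    (hs : (Matrix.fromBlocks A B C D)ᵀ * stdJ n * Matrix.fromBlocks A B C D = stdJ n)
    (hB : B.det ≠ 0)
    (W : EuclideanSpace ℝ (Fin n) → EuclideanSpace ℝ (Fin n) → ℝ)
    (hW : ∀ x x', W x x' =
      (1 / 2) * ((D * B⁻¹).mulVec x ⬝ᵥ x) - (B⁻¹.mulVec x ⬝ᵥ x')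
        + (1 / 2) * ((B⁻¹ * A).mulVec x' ⬝ᵥ x'))
    (x p x' p' : EuclideanSpace ℝ (Fin n)) :
    (Matrix.fromBlocks A B C D).mulVec (Sum.elim x' p') = Sum.elim x p ↔
      p = gradient (fun y => W y x') x ∧ p' = -gradient (fun y' => W x y') x' := by

  obtain ⟨f1, f2, f3⟩ := blocks_of_symplectic n A B C D hs
  have hBB : B⁻¹ * B = 1 := Matrix.nonsing_inv_mul B (isUnit_iff_ne_zero.mpr hB)
  have hBB' : B * B⁻¹ = 1 := Matrix.mul_nonsing_inv B (isUnit_iff_ne_zero.mpr hB)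
  have hBt : Bᵀ.det ≠ 0 := by rwa [Matrix.det_transpose]
  have hBtB : (Bᵀ)⁻¹ * Bᵀ = 1 := Matrix.nonsing_inv_mul _ (isUnit_iff_ne_zero.mpr hBt)
  have hBtB' : Bᵀ * (Bᵀ)⁻¹ = 1 := Matrix.mul_nonsing_inv _ (isUnit_iff_ne_zero.mpr hBt)
  -- symmetry of D * B⁻¹
  have hsymm1 : (D * B⁻¹)ᵀ = D * B⁻¹ := by
    rw [Matrix.transpose_mul, Matrix.transpose_nonsing_inv]
    have hD : Dᵀ = Bᵀ * (D * B⁻¹) := by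
      rw [← Matrix.mul_assoc, f1, Matrix.mul_assoc, hBB', Matrix.mul_one]
    rw [hD, ← Matrix.mul_assoc, hBtB, Matrix.one_mul]
  -- symmetry of B⁻¹ * A
  have hsymm2 : (B⁻¹ * A)ᵀ = B⁻¹ * A := by
    rw [Matrix.transpose_mul, Matrix.transpose_nonsing_inv]
    have hA : (B⁻¹ * A) * Bᵀ = Aᵀ := by
      rw [Matrix.mul_assoc, f3, ← Matrix.mul_assoc, hBB, Matrix.one_mul]
    rw [← hA, Matrix.mul_assoc, hBtB', Matrix.mul_one]
  -- key identity for C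
  have hDB : (Bᵀ)⁻¹ * Dᵀ = D * B⁻¹ := by
    rw [← Matrix.transpose_nonsing_inv, ← Matrix.transpose_mul, hsymm1]
  have hC : C = D * B⁻¹ * A - (Bᵀ)⁻¹ := by
    have h1 : Bᵀ * C = Dᵀ * A - 1 := by
      linear_combination (norm := noncomm_ring) -f2
    have h2 : C = (Bᵀ)⁻¹ * (Bᵀ * C) := by rw [← Matrix.mul_assoc, hBtB, Matrix.one_mul]
    rw [h2, h1, Matrix.mul_sub, Matrix.mul_one, ← Matrix.mul_assoc, hDB]
  -- the two gradients
  have hgrad1 : gradient (fun y => W y x') x =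
      (WithLp.equiv 2 (Fin n → ℝ)).symm ((D * B⁻¹) *ᵥ x + -((B⁻¹)ᵀ *ᵥ x')) := by
    have hfun : (fun y : EuclideanSpace ℝ (Fin n) => W y x')
        = fun y : EuclideanSpace ℝ (Fin n) => (1/2) * ((D * B⁻¹) *ᵥ y ⬝ᵥ y)
            + ((-((B⁻¹)ᵀ *ᵥ (x' : Fin n → ℝ))) ⬝ᵥ y) + ((1/2) * ((B⁻¹ * A) *ᵥ x' ⬝ᵥ x')) := by
      funext y
      rw [hW]
      have h6 : (B⁻¹ *ᵥ y) ⬝ᵥ (x' : Fin n → ℝ) = ((B⁻¹)ᵀ *ᵥ x') ⬝ᵥ y := by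
        rw [dotProduct_comm, dotProduct_mulVec, ← mulVec_transpose]
      rw [h6, neg_dotProduct]
      ring
    rw [hfun]
    exact (hasGradientAt_quad n (D * B⁻¹) hsymm1 (-((B⁻¹)ᵀ *ᵥ x')) _ x).gradient
  have hgrad2 : gradient (fun y' => W x y') x' =
      (WithLp.equiv 2 (Fin n → ℝ)).symm ((B⁻¹ * A) *ᵥ x' + -(B⁻¹ *ᵥ x)) := by
    have hfun : (fun y' : EuclideanSpace ℝ (Fin n) => W x y')
        = fun y' : EuclideanSpace ℝ (Fin n) => (1/2) * ((B⁻¹ * A) *ᵥ y' ⬝ᵥ y')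
            + ((-(B⁻¹ *ᵥ (x : Fin n → ℝ))) ⬝ᵥ y') + ((1/2) * ((D * B⁻¹) *ᵥ x ⬝ᵥ x)) := by
      funext y'
      rw [hW, neg_dotProduct]
      ring
    rw [hfun]
    exact (hasGradientAt_quad n (B⁻¹ * A) hsymm2 (-(B⁻¹ *ᵥ x)) _ x').gradient
  rw [hgrad1, hgrad2, Matrix.fromBlocks_mulVec]
  have hsum : ∀ f g f' g' : Fin n → ℝ, Sum.elim f g = Sum.elim f' g' ↔ f = f' ∧ g = g' := by
    intro f g f' g'
    constructor
    · intro h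
      exact ⟨funext fun i => congrFun h (Sum.inl i), funext fun i => congrFun h (Sum.inr i)⟩
    · rintro ⟨rfl, rfl⟩; rfl
  rw [hsum, ← (WithLp.ofLp_injective 2).eq_iff, ← (WithLp.ofLp_injective 2).eq_iff (a := p')]
  -- now a purely vector-level statement
  show (A *ᵥ (x' : Fin n → ℝ) + B *ᵥ (p' : Fin n → ℝ) = x
      ∧ C *ᵥ (x' : Fin n → ℝ) + D *ᵥ (p' : Fin n → ℝ) = p) ↔
    ((p : Fin n → ℝ) = (D * B⁻¹) *ᵥ x + -((B⁻¹)ᵀ *ᵥ x')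
      ∧ (p' : Fin n → ℝ) = -((B⁻¹ * A) *ᵥ x' + -(B⁻¹ *ᵥ x)))
  constructor
  · rintro ⟨h1, h2⟩
    have hp' : (p' : Fin n → ℝ) = B⁻¹ *ᵥ x - (B⁻¹ * A) *ᵥ x' := by
      have h3 := congrArg (fun w => B⁻¹ *ᵥ w) h1
      simp only [Matrix.mulVec_add, Matrix.mulVec_mulVec, hBB, Matrix.one_mulVec] at h3
      exact eq_sub_of_add_eq' h3
    have hp : (p : Fin n → ℝ) = (D * B⁻¹) *ᵥ x - (B⁻¹)ᵀ *ᵥ x' := by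
      rw [← h2, hp', hC]
      simp only [Matrix.sub_mulVec, Matrix.mulVec_sub, Matrix.mulVec_mulVec,
        Matrix.mul_assoc, Matrix.transpose_nonsing_inv]
      abel
    constructor
    · rw [hp, sub_eq_add_neg]
    · rw [hp']; abel
  · rintro ⟨hp, hp'⟩
    have hp'2 : (p' : Fin n → ℝ) = B⁻¹ *ᵥ x - (B⁻¹ * A) *ᵥ x' := by rw [hp']; abel
    constructor
    · rw [hp'2]
      simp only [Matrix.mulVec_sub, Matrix.mulVec_mulVec, ← Matrix.mul_assoc, hBB',
        Matrix.one_mul, Matrix.one_mulVec]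
      ring
    · rw [hp'2, hp, hC]
      simp only [Matrix.sub_mulVec, Matrix.mulVec_sub, Matrix.mulVec_mulVec,
        Matrix.mul_assoc, Matrix.transpose_nonsing_inv]
      abel
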